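/- Let F be a field, let (i_1, …, i_N) be any reduced word for the longest element w₀ of S_{r+1}, and let γ_1, …, γ_N be the induced enumeration of the positive roots Φ⁺. Then the map F^N → GL_{r+1}(F) sending (x_1, …, x_N) to the product e_{−γ_1}(x_1) e_{−γ_2}(x_2) ⋯ e_{−γ_N}(x_N) is a bijection from F^N onto the group of lower unitriangular matrices in GL_{r+1}(F); in particular, every lower unitriangular u can be written as u = e_{−γ_1}(x_1) ⋯ e_{−γ_N}(x_N) for unique x_1, …, x_N ∈ F. -/

import Mathlib

set_option maxHeartbeats 1000000

open Fin.NatCast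

/-- The simple transposition `s_k` of `S_{r+1}` (0-indexed: it swaps `k` and `k+1`;
it corresponds to the 1-based simple transposition `s_{k+1}`). -/
def sT (r k : ℕ) : Equiv.Perm (Fin (r + 1)) :=
  Equiv.swap (k : Fin (r + 1)) ((k + 1 : ℕ) : Fin (r + 1))

section Comb
variable (r : ℕ)

def invSet (σ : Equiv.Perm (Fin (r+1))) : Finset (Fin (r+1) × Fin (r+1)) :=
  Finset.univ.filter fun p => p.1 < p.2 ∧ σ p.2 < σ p.1

variable {r}

lemma valA {a : ℕ} (ha : a < r) : ((a : Fin (r+1)) : ℕ) = a := by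
  rw [Fin.val_natCast]; exact Nat.mod_eq_of_lt (by omega)

lemma valB {a : ℕ} (ha : a < r) : (((a+1 : ℕ) : Fin (r+1)) : ℕ) = a + 1 := by
  rw [Fin.val_natCast]; exact Nat.mod_eq_of_lt (by omega)

lemma A_ne_B {a : ℕ} (ha : a < r) : (a : Fin (r+1)) ≠ ((a+1 : ℕ) : Fin (r+1)) := by
  intro h
  have := congrArg Fin.val h
  rw [valA ha, valB ha] at this
  omega

lemma sT_val {a : ℕ} (ha : a < r) (x : Fin (r+1)) :
    ((sT r a x : Fin (r+1)) : ℕ) =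
      if (x : ℕ) = a then a + 1 else if (x : ℕ) = a + 1 then a else x := by
  have hiffA : (x = (a : Fin (r+1))) = ((x : ℕ) = a) := propext (by rw [Fin.ext_iff, valA ha])
  have hiffB : (x = ((a+1 : ℕ) : Fin (r+1))) = ((x : ℕ) = a + 1) :=
    propext (by rw [Fin.ext_iff, valB ha])
  simp only [sT, Equiv.swap_apply_def, hiffA, hiffB]
  split_ifs with h1 h2
  · exact valB ha
  · exact valA ha
  · rfl

lemma sT_order {a : ℕ} (ha : a < r) (x y : Fin (r+1))
    (h1 : ¬((x : ℕ) = a ∧ (y : ℕ) = a + 1))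
    (h2 : ¬((x : ℕ) = a + 1 ∧ (y : ℕ) = a)) :
    (sT r a x < sT r a y ↔ x < y) := by
  rw [Fin.lt_def, Fin.lt_def, sT_val ha, sT_val ha]
  have := x.isLt
  have := y.isLt
  split_ifs <;> omega

lemma sT_apply_A {a : ℕ} : sT r a (a : Fin (r+1)) = ((a+1 : ℕ) : Fin (r+1)) :=
  Equiv.swap_apply_left _ _

lemma sT_apply_B {a : ℕ} : sT r a ((a+1 : ℕ) : Fin (r+1)) = (a : Fin (r+1)) :=
  Equiv.swap_apply_right _ _

lemma A_lt_B {a : ℕ} (ha : a < r) : (a : Fin (r+1)) < ((a+1 : ℕ) : Fin (r+1)) := by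
  rw [Fin.lt_def, valA ha, valB ha]; omega

lemma sT_invol {a : ℕ} : sT r a * sT r a = 1 := by
  simp [sT, Equiv.swap_mul_self]

lemma A1 {a : ℕ} (ha : a < r) (σ : Equiv.Perm (Fin (r+1)))
    (hasc : σ⁻¹ (a : Fin (r+1)) < σ⁻¹ ((a+1 : ℕ) : Fin (r+1))) :
    invSet r (sT r a * σ) =
      insert (σ⁻¹ (a : Fin (r+1)), σ⁻¹ ((a+1 : ℕ) : Fin (r+1))) (invSet r σ) ∧
    (σ⁻¹ (a : Fin (r+1)), σ⁻¹ ((a+1 : ℕ) : Fin (r+1))) ∉ invSet r σ := by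
  have hAB : (a : Fin (r+1)) < ((a+1 : ℕ) : Fin (r+1)) := A_lt_B ha
  have hABn : ¬ (((a+1 : ℕ) : Fin (r+1)) < (a : Fin (r+1))) := not_lt.2 hAB.le
  have hnotmem : (σ⁻¹ (a : Fin (r+1)), σ⁻¹ ((a+1 : ℕ) : Fin (r+1))) ∉ invSet r σ := by
    simp only [invSet, Finset.mem_filter, Finset.mem_univ, true_and, not_and]
    intro _
    simp only [← Equiv.Perm.mul_apply, mul_inv_cancel, Equiv.Perm.one_apply]
    exact hABn
  refine ⟨?_, hnotmem⟩
  ext p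
  obtain ⟨i, j⟩ := p
  simp only [invSet, Finset.mem_filter]
  simp only [invSet, Finset.mem_filter, Finset.mem_univ, true_and, Finset.mem_insert,
    Prod.mk.injEq, Equiv.Perm.mul_apply]
  by_cases c1 : σ i = (a : Fin (r+1)) ∧ σ j = ((a+1 : ℕ) : Fin (r+1))
  · obtain ⟨e1, e2⟩ := c1
    have hi : i = σ⁻¹ (a : Fin (r+1)) := by rw [← e1]; simp
    have hj : j = σ⁻¹ ((a+1 : ℕ) : Fin (r+1)) := by rw [← e2]; simp
    have lhs1 : i < j := by rw [hi, hj]; exact hasc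
    have lhs2 : sT r a (σ j) < sT r a (σ i) := by
      rw [e1, e2, sT_apply_A, sT_apply_B]; exact hAB
    exact ⟨fun _ => Or.inl ⟨hi, hj⟩, fun _ => ⟨lhs1, lhs2⟩⟩
  · by_cases c2 : σ i = ((a+1 : ℕ) : Fin (r+1)) ∧ σ j = (a : Fin (r+1))
    · obtain ⟨e1, e2⟩ := c2
      have hi : i = σ⁻¹ ((a+1 : ℕ) : Fin (r+1)) := by rw [← e1]; simp
      have hj : j = σ⁻¹ (a : Fin (r+1)) := by rw [← e2]; simp
      have hnij : ¬ i < j := by rw [hi, hj]; exact not_lt.2 hasc.le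
      have hne : ¬ (i = σ⁻¹ (a : Fin (r+1))) := by
        intro h
        apply A_ne_B ha
        rw [← e1, h]; simp
      constructor
      · rintro ⟨h, -⟩; exact absurd h hnij
      · rintro (⟨h, -⟩ | ⟨h, -⟩)
        · exact absurd h hne
        · exact absurd h hnij
    · have key : sT r a (σ j) < sT r a (σ i) ↔ σ j < σ i := by
        apply sT_order ha
        · rintro ⟨u, v⟩
          exact c2 ⟨Fin.ext (by rw [valB ha]; exact v), Fin.ext (by rw [valA ha]; exact u)⟩
        · rintro ⟨u, v⟩
          exact c1 ⟨Fin.ext (by rw [valA ha]; exact v), Fin.ext (by rw [valB ha]; exact u)⟩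
      have hfst : ¬(i = σ⁻¹ (a : Fin (r+1)) ∧ j = σ⁻¹ ((a+1 : ℕ) : Fin (r+1))) := by
        rintro ⟨u, v⟩
        exact c1 ⟨by rw [u]; simp, by rw [v]; simp⟩
      rw [key]
      exact ⟨fun h => Or.inr h, fun h => h.resolve_left hfst⟩

lemma A2 {a : ℕ} (ha : a < r) (σ : Equiv.Perm (Fin (r+1)))
    (hdesc : σ⁻¹ ((a+1 : ℕ) : Fin (r+1)) < σ⁻¹ (a : Fin (r+1))) :
    invSet r (sT r a * σ) =
      (invSet r σ).erase (σ⁻¹ ((a+1 : ℕ) : Fin (r+1)), σ⁻¹ (a : Fin (r+1))) ∧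
    (σ⁻¹ ((a+1 : ℕ) : Fin (r+1)), σ⁻¹ (a : Fin (r+1))) ∈ invSet r σ := by
  set σ' := sT r a * σ with hσ'
  have hσeq : σ = sT r a * σ' := by
    rw [hσ', ← mul_assoc, sT_invol, one_mul]
  have hi1 : σ'⁻¹ (a : Fin (r+1)) = σ⁻¹ ((a+1 : ℕ) : Fin (r+1)) := by
    rw [hσ']
    simp only [mul_inv_rev, Equiv.Perm.mul_apply]
    congr 1
    have : (sT r a)⁻¹ = sT r a := by
      rw [sT]; exact Equiv.swap_inv _ _
    rw [this, sT_apply_A]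
  have hi2 : σ'⁻¹ ((a+1 : ℕ) : Fin (r+1)) = σ⁻¹ (a : Fin (r+1)) := by
    rw [hσ']
    simp only [mul_inv_rev, Equiv.Perm.mul_apply]
    congr 1
    have : (sT r a)⁻¹ = sT r a := by
      rw [sT]; exact Equiv.swap_inv _ _
    rw [this, sT_apply_B]
  have hasc' : σ'⁻¹ (a : Fin (r+1)) < σ'⁻¹ ((a+1 : ℕ) : Fin (r+1)) := by
    rw [hi1, hi2]; exact hdesc
  obtain ⟨heq, hnm⟩ := A1 ha σ' hasc'
  rw [← hσeq] at heq
  rw [hi1, hi2] at heq hnm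
  constructor
  · rw [heq, Finset.erase_insert hnm]
  · rw [heq]; exact Finset.mem_insert_self _ _


/-- The permutation `s_{i_N} s_{i_{N−1}} ⋯ s_{i_{k+2}} s_{i_{k+1}}` used to define
`γ_{k+1}` from the word `w` (here `k` is 0-indexed). -/
def piPerm (r : ℕ) (w : List ℕ) (k : ℕ) : Equiv.Perm (Fin (r + 1)) :=
  (((w.drop (k + 1)).reverse).map (sT r)).prod

/-- The first index of the positive root `γ_{k+1} = e_{π(a)} − e_{π(a+1)}`, where
`α_{i_{k+1}} = e_a − e_{a+1}` (0-indexed `k`). -/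
def gFst (r : ℕ) (w : List ℕ) (k : ℕ) : Fin (r + 1) :=
  piPerm r w k ((w.getD k 0 : ℕ) : Fin (r + 1))

/-- The second index of the positive root `γ_{k+1}`. -/
def gSnd (r : ℕ) (w : List ℕ) (k : ℕ) : Fin (r + 1) :=
  piPerm r w k ((w.getD k 0 + 1 : ℕ) : Fin (r + 1))

def uPerm (r : ℕ) (w : List ℕ) (k : ℕ) : Equiv.Perm (Fin (r+1)) :=
  ((w.drop k).map (sT r)).prod

variable {r : ℕ}

lemma uPerm_zero (w : List ℕ) : uPerm r w 0 = (w.map (sT r)).prod := by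
  simp [uPerm]

lemma uPerm_last (w : List ℕ) {k : ℕ} (hk : w.length ≤ k) : uPerm r w k = 1 := by
  rw [uPerm, List.drop_eq_nil_of_le hk]
  simp

lemma uPerm_succ (w : List ℕ) {k : ℕ} (hk : k < w.length) :
    uPerm r w k = sT r (w.getD k 0) * uPerm r w (k+1) := by
  rw [uPerm, uPerm, List.drop_eq_getElem_cons hk, List.map_cons, List.prod_cons,
    List.getD_eq_getElem w 0 hk]

lemma piPerm_eq (w : List ℕ) (k : ℕ) : piPerm r w k = (uPerm r w (k+1))⁻¹ := by
  rw [piPerm, uPerm, List.map_reverse, List.prod_reverse_noncomm]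
  congr 1
  rw [List.map_map]
  have : (fun x => x⁻¹) ∘ sT r = sT r := by
    funext a
    show (sT r a)⁻¹ = sT r a
    rw [sT, Equiv.swap_inv]
  rw [this]

lemma invSet_one : invSet r 1 = ∅ := by
  ext p
  simp only [invSet, Finset.mem_filter]
  simp only [invSet, Finset.mem_filter, Finset.mem_univ, true_and, Finset.notMem_empty,
    iff_false, not_and, Equiv.Perm.one_apply]
  intro h
  exact not_lt.2 h.le

def allPairs (r : ℕ) : Finset (Fin (r+1) × Fin (r+1)) :=
  Finset.univ.filter fun p => p.1 < p.2

lemma invSet_rev : invSet r (Fin.revPerm) = allPairs r := by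
  ext p
  simp only [invSet, allPairs, Finset.mem_filter, Finset.mem_univ, true_and,
    Fin.revPerm_apply, and_iff_left_iff_imp]
  intro h
  exact Fin.rev_lt_rev.2 h

lemma card_allPairs : (allPairs r).card = r * (r + 1) / 2 := by
  classical
  set Q : Finset (Fin (r+1) × Fin (r+1)) := Finset.univ.filter fun p => p.2 < p.1 with hQ
  have hcard : (allPairs r).card = Q.card := by
    apply Finset.card_bij (fun p _ => p.swap)
    · intro p hp
      simp only [allPairs, Finset.mem_filter, Finset.mem_univ, true_and] at hp
      simp [hQ, hp]
    · intro p hp q hq h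
      exact Prod.swap_injective h
    · intro q hq
      simp only [hQ, Finset.mem_filter, Finset.mem_univ, true_and] at hq
      exact ⟨q.swap, by simp [allPairs, hq], by simp⟩
  have hunion : allPairs r ∪ Q = Finset.univ.offDiag := by
    ext p
    simp only [allPairs, hQ, Finset.mem_union, Finset.mem_filter, Finset.mem_univ, true_and,
      Finset.mem_offDiag]
    constructor
    · rintro (h | h)
      · exact h.ne
      · exact h.ne'
    · intro h
      rcases lt_or_gt_of_ne h with h | h
      · exact Or.inl h
      · exact Or.inr h
  have hdisj : Disjoint (allPairs r) Q := by
    rw [Finset.disjoint_left]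
    intro p hp hq
    simp only [allPairs, Finset.mem_filter, Finset.mem_univ, true_and] at hp
    simp only [hQ, Finset.mem_filter, Finset.mem_univ, true_and] at hq
    exact absurd hq (not_lt.2 hp.le)
  have hoff : (Finset.univ.offDiag : Finset ((Fin (r+1) × Fin (r+1)))).card
      = (r+1) * (r+1) - (r+1) := by
    rw [Finset.offDiag_card]
    simp
  have := Finset.card_union_of_disjoint hdisj
  rw [hunion, hoff, ← hcard] at this
  have hx : (r+1) * (r+1) = r * (r+1) + (r+1) := by ring
  omega

section Word
variable (w : List ℕ)

lemma getD_lt (hletters : ∀ i ∈ w, i < r) {k : ℕ} (hk : k < w.length) : w.getD k 0 < r := by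
  apply hletters
  rw [List.getD_eq_getElem w 0 hk]
  exact List.getElem_mem hk

lemma step (hletters : ∀ i ∈ w, i < r) {k : ℕ} (hk : k < w.length) :
    (invSet r (uPerm r w k)).card = (invSet r (uPerm r w (k+1))).card + 1 ∨
    (invSet r (uPerm r w k)).card + 1 = (invSet r (uPerm r w (k+1))).card := by
  have ha := getD_lt w hletters hk
  set σ := uPerm r w (k+1) with hσ
  set a := w.getD k 0 with hadef
  rcases lt_trichotomy (σ⁻¹ (a : Fin (r+1))) (σ⁻¹ ((a+1 : ℕ) : Fin (r+1))) with h | h | h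
  · left
    obtain ⟨heq, hnm⟩ := A1 ha σ h
    rw [uPerm_succ w hk, ← hadef, ← hσ, heq, Finset.card_insert_of_notMem hnm]
  · exact absurd (σ⁻¹.injective h) (A_ne_B ha)
  · right
    obtain ⟨heq, hm⟩ := A2 ha σ h
    have hpos : 1 ≤ (invSet r σ).card := Finset.card_pos.2 ⟨_, hm⟩
    rw [uPerm_succ w hk, ← hadef, ← hσ, heq, Finset.card_erase_of_mem hm]
    omega

lemma card_ub (hletters : ∀ i ∈ w, i < r) : ∀ m k, k + m = w.length → (invSet r (uPerm r w k)).card ≤ m := by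
  intro m
  induction m with
  | zero =>
      intro k hk
      rw [uPerm_last w (by omega), invSet_one]
      simp
  | succ m ih =>
      intro k hk
      rcases step w hletters (show k < w.length by omega) with h | h
      · have := ih (k+1) (by omega)
        omega
      · have := ih (k+1) (by omega)
        omega

lemma card_u0 (hred : (w.map (sT r)).prod = Fin.revPerm)
    (hlen : w.length = r * (r + 1) / 2) : (invSet r (uPerm r w 0)).card = w.length := by
  rw [uPerm_zero, hred, invSet_rev, card_allPairs, hlen]

lemma card_lb (hletters : ∀ i ∈ w, i < r) (hred : (w.map (sT r)).prod = Fin.revPerm)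
    (hlen : w.length = r * (r + 1) / 2) : ∀ k, k ≤ w.length →
    w.length - k ≤ (invSet r (uPerm r w k)).card := by
  intro k
  induction k with
  | zero =>
      intro _
      rw [card_u0 w hred hlen]
      omega
  | succ k ih =>
      intro hk
      have h1 := ih (by omega)
      rcases step w hletters (show k < w.length by omega) with h | h <;> omega

lemma card_exact (hletters : ∀ i ∈ w, i < r) (hred : (w.map (sT r)).prod = Fin.revPerm)
    (hlen : w.length = r * (r + 1) / 2) {k : ℕ} (hk : k ≤ w.length) :
    (invSet r (uPerm r w k)).card = w.length - k := by
  have h1 := card_ub w hletters (w.length - k) k (by omega)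
  have h2 := card_lb w hletters hred hlen k hk
  omega

lemma ascent (hletters : ∀ i ∈ w, i < r) (hred : (w.map (sT r)).prod = Fin.revPerm)
    (hlen : w.length = r * (r + 1) / 2) {k : ℕ} (hk : k < w.length) :
    gFst r w k < gSnd r w k ∧
    invSet r (uPerm r w k) = insert (gFst r w k, gSnd r w k) (invSet r (uPerm r w (k+1))) ∧
    (gFst r w k, gSnd r w k) ∉ invSet r (uPerm r w (k+1)) := by
  have ha := getD_lt w hletters hk
  set σ := uPerm r w (k+1) with hσ
  set a := w.getD k 0 with hadef
  have hgf : gFst r w k = σ⁻¹ (a : Fin (r+1)) := by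
    rw [gFst, piPerm_eq, ← hσ, ← hadef]
  have hgs : gSnd r w k = σ⁻¹ ((a+1 : ℕ) : Fin (r+1)) := by
    rw [gSnd, piPerm_eq, ← hσ, ← hadef]
  rcases lt_trichotomy (σ⁻¹ (a : Fin (r+1))) (σ⁻¹ ((a+1 : ℕ) : Fin (r+1))) with h | h | h
  · obtain ⟨heq, hnm⟩ := A1 ha σ h
    rw [hgf, hgs]
    refine ⟨h, ?_, hnm⟩
    rw [uPerm_succ w hk, ← hadef, ← hσ, heq]
  · exact absurd (σ⁻¹.injective h) (A_ne_B ha)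
  · exfalso
    obtain ⟨heq, hm⟩ := A2 ha σ h
    have c1 : (invSet r (uPerm r w k)).card = w.length - k :=
      card_exact w hletters hred hlen (le_of_lt hk)
    have c2 : (invSet r σ).card = w.length - (k+1) :=
      card_exact w hletters hred hlen (by omega)
    have hpos : 1 ≤ (invSet r σ).card := Finset.card_pos.2 ⟨_, hm⟩
    rw [uPerm_succ w hk, ← hadef, ← hσ, heq, Finset.card_erase_of_mem hm] at c1
    omega

lemma invSet_mono (hletters : ∀ i ∈ w, i < r) (hred : (w.map (sT r)).prod = Fin.revPerm)
    (hlen : w.length = r * (r + 1) / 2) : ∀ m k, k ≤ m → m ≤ w.length →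
    invSet r (uPerm r w m) ⊆ invSet r (uPerm r w k) := by
  intro m
  induction m with
  | zero =>
      intro k hk _
      interval_cases k
      exact subset_rfl
  | succ m ih =>
      intro k hk hm
      rcases Nat.eq_or_lt_of_le hk with rfl | hlt
      · exact subset_rfl
      · have h1 := ih k (by omega) (by omega)
        have h2 := (ascent w hletters hred hlen (show m < w.length by omega)).2.1
        refine subset_trans ?_ h1
        rw [h2]
        exact Finset.subset_insert _ _

lemma roots_mem (hletters : ∀ i ∈ w, i < r) (hred : (w.map (sT r)).prod = Fin.revPerm)
    (hlen : w.length = r * (r + 1) / 2) {k : ℕ} (hk : k < w.length) :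
    (gFst r w k, gSnd r w k) ∈ invSet r (uPerm r w k) := by
  rw [(ascent w hletters hred hlen hk).2.1]
  exact Finset.mem_insert_self _ _

lemma roots_inj (hletters : ∀ i ∈ w, i < r) (hred : (w.map (sT r)).prod = Fin.revPerm)
    (hlen : w.length = r * (r + 1) / 2) : ∀ k m, k < w.length → m < w.length → k ≠ m →
    (gFst r w k, gSnd r w k) ≠ (gFst r w m, gSnd r w m) := by
  have key : ∀ k m, k < m → m < w.length →
      (gFst r w k, gSnd r w k) ≠ (gFst r w m, gSnd r w m) := by
    intro k m hkm hm heq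
    have h1 : (gFst r w m, gSnd r w m) ∈ invSet r (uPerm r w m) :=
      roots_mem w hletters hred hlen hm
    have h2 : invSet r (uPerm r w m) ⊆ invSet r (uPerm r w (k+1)) :=
      invSet_mono w hletters hred hlen m (k+1) (by omega) (by omega)
    have h3 := (ascent w hletters hred hlen (show k < w.length by omega)).2.2
    rw [heq] at h3
    exact h3 (h2 h1)
  intro k m hk hm hne
  rcases lt_or_gt_of_ne hne with h | h
  · exact key k m h hm
  · exact fun heq => key m k h hk heq.symm

lemma roots_surj (hletters : ∀ i ∈ w, i < r) (hred : (w.map (sT r)).prod = Fin.revPerm)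
    (hlen : w.length = r * (r + 1) / 2) {i j : Fin (r+1)} (hij : i < j) :
    ∃ k, k < w.length ∧ gFst r w k = i ∧ gSnd r w k = j := by
  classical
  set f : Fin w.length → Fin (r+1) × Fin (r+1) := fun k => (gFst r w k.1, gSnd r w k.1) with hf
  have hinj : Function.Injective f := by
    intro k m h
    by_contra hne
    exact roots_inj w hletters hred hlen k.1 m.1 k.2 m.2
      (fun hc => hne (Fin.ext hc)) h
  have hsub : Finset.image f Finset.univ ⊆ allPairs r := by
    intro p hp
    simp only [Finset.mem_image] at hp
    obtain ⟨k, -, rfl⟩ := hp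
    have h1 := (ascent w hletters hred hlen k.2).1
    simp only [allPairs, Finset.mem_filter, Finset.mem_univ, true_and]
    exact h1
  have hcard : (Finset.image f Finset.univ).card = (allPairs r).card := by
    rw [Finset.card_image_of_injective _ hinj, card_allPairs]
    simp [hlen]
  have heq : Finset.image f Finset.univ = allPairs r :=
    Finset.eq_of_subset_of_card_le hsub (le_of_eq hcard.symm)
  have hmem : (i, j) ∈ allPairs r := by
    simp only [allPairs, Finset.mem_filter, Finset.mem_univ, true_and]
    exact hij
  rw [← heq] at hmem
  simp only [Finset.mem_image] at hmem
  obtain ⟨k, -, hk⟩ := hmem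
  refine ⟨k.1, k.2, ?_, ?_⟩
  · exact congrArg Prod.fst hk
  · exact congrArg Prod.snd hk

end Word
end Comb

section Mat
variable (F : Type*) [Field F]

variable {n : ℕ}

def LU (M : Matrix (Fin n) (Fin n) F) : Prop :=
  (∀ i, M i i = 1) ∧ ∀ i j, i < j → M i j = 0

variable {F}

lemma lu_one : LU F (1 : Matrix (Fin n) (Fin n) F) :=
  ⟨fun i => Matrix.one_apply_eq i, fun i j hij => Matrix.one_apply_ne (Fin.ne_of_lt hij)⟩

lemma lu_mul {M N : Matrix (Fin n) (Fin n) F} (hM : LU F M) (hN : LU F N) : LU F (M * N) := by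
  constructor
  · intro i
    rw [Matrix.mul_apply, Finset.sum_eq_single i]
    · rw [hM.1, hN.1, one_mul]
    · intro k _ hki
      rcases lt_or_gt_of_ne hki with h | h
      · rw [hN.2 k i h, mul_zero]
      · rw [hM.2 i k h, zero_mul]
    · intro h
      exact absurd (Finset.mem_univ i) h
  · intro i j hij
    rw [Matrix.mul_apply]
    apply Finset.sum_eq_zero
    intro k _
    rcases lt_or_ge i k with h | h
    · rw [hM.2 i k h, zero_mul]
    · rw [hN.2 k j (lt_of_le_of_lt h hij), mul_zero]

lemma lu_prod {L : List (Matrix (Fin n) (Fin n) F)} (h : ∀ M ∈ L, LU F M) : LU F L.prod := by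
  induction L with
  | nil => exact lu_one
  | cons M L ih =>
      rw [List.prod_cons]
      exact lu_mul (h M (List.mem_cons_self)) (ih fun N' hN' => h N' (List.mem_cons_of_mem _ hN'))

def Efac (p : Fin n × Fin n) (t : F) : Matrix (Fin n) (Fin n) F :=
  1 + Matrix.single p.2 p.1 t

lemma lu_Efac {p : Fin n × Fin n} (hp : p.1 < p.2) (t : F) : LU F (Efac p t) := by
  constructor
  · intro i
    simp only [Efac, Matrix.add_apply, Matrix.one_apply_eq]
    rw [Matrix.single_apply_of_ne, add_zero]
    rintro ⟨h1, h2⟩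
    rw [← h1] at h2
    exact absurd (h2 ▸ hp) (lt_irrefl _)
  · intro i j hij
    simp only [Efac, Matrix.add_apply]
    rw [Matrix.one_apply_ne (Fin.ne_of_lt hij), Matrix.single_apply_of_ne, add_zero]
    rintro ⟨h1, h2⟩
    rw [← h1, ← h2] at hij
    exact absurd (hp.trans hij) (lt_irrefl _)

lemma Efac_mul_apply (p : Fin n × Fin n) (t : F) (Q : Matrix (Fin n) (Fin n) F) (j i : Fin n) :
    (Efac p t * Q) j i = Q j i + if j = p.2 then t * Q p.1 i else 0 := by
  rw [Efac, Matrix.add_mul, Matrix.one_mul, Matrix.add_apply]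
  congr 1
  by_cases h : j = p.2
  · subst h
    rw [Matrix.single_mul_apply_same, if_pos rfl]
  · rw [if_neg h]
    exact Matrix.single_mul_apply_of_ne _ _ _ _ _ h _

lemma key_diff (h : ℕ) :
    ∀ (L : List ((Fin n × Fin n) × F × F)),
    (∀ q ∈ L, q.1.1 < q.1.2) →
    (∀ q ∈ L, ((q.1.2 : ℕ) - (q.1.1 : ℕ) < h) → q.2.1 = q.2.2) →
    ∀ i j : Fin n, i < j → (j : ℕ) - (i : ℕ) ≤ h →
      (L.map fun q => Efac q.1 q.2.1).prod j i - (L.map fun q => Efac q.1 q.2.2).prod j i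
        = (L.map fun q => if q.1 = (i, j) then q.2.1 - q.2.2 else 0).sum := by
  intro L
  induction L with
  | nil =>
      intro _ _ i j hij _
      simp only [List.map_nil, List.prod_nil, List.sum_nil]
      rw [Matrix.one_apply_ne (Fin.ne_of_gt hij)]
      simp
  | cons q L ih =>
      intro hpos hagree i j hij hh
      have hq : q.1.1 < q.1.2 := hpos q (List.mem_cons_self)
      have hposL : ∀ q' ∈ L, q'.1.1 < q'.1.2 := fun q' hq' => hpos q' (List.mem_cons_of_mem _ hq')
      have hagreeL : ∀ q' ∈ L, ((q'.1.2 : ℕ) - (q'.1.1 : ℕ) < h) → q'.2.1 = q'.2.2 :=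
        fun q' hq' => hagree q' (List.mem_cons_of_mem _ hq')
      have ihL := ih hposL hagreeL i j hij hh
      have luX : LU F (L.map fun q => Efac q.1 q.2.1).prod := by
        apply lu_prod
        intro M hM
        simp only [List.mem_map] at hM
        obtain ⟨q', hq', rfl⟩ := hM
        exact lu_Efac (hposL q' hq') _
      have luY : LU F (L.map fun q => Efac q.1 q.2.2).prod := by
        apply lu_prod
        intro M hM
        simp only [List.mem_map] at hM
        obtain ⟨q', hq', rfl⟩ := hM
        exact lu_Efac (hposL q' hq') _
      simp only [List.map_cons, List.prod_cons, List.sum_cons]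
      rw [Efac_mul_apply, Efac_mul_apply]
      set Px := (L.map fun q => Efac q.1 q.2.1).prod with hPx
      set Py := (L.map fun q => Efac q.1 q.2.2).prod with hPy
      by_cases hjb : j = q.1.2
      · rcases lt_trichotomy q.1.1 i with hai | hai | hai
        · -- a < i : entries above diagonal vanish
          rw [if_pos hjb, if_pos hjb, luX.2 _ _ hai, luY.2 _ _ hai, mul_zero, mul_zero]
          have hne : ¬ (q.1 = (i, j)) := by
            intro hc
            rw [hc] at hai
            exact absurd hai (lt_irrefl _)
          rw [if_neg hne]
          rw [add_zero, add_zero, zero_add]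
          exact ihL
        · -- a = i : the designated term
          rw [if_pos hjb, if_pos hjb, hai, luX.1, luY.1, mul_one, mul_one]
          have heq : q.1 = (i, j) := by
            rw [Prod.ext_iff]
            exact ⟨hai, hjb.symm⟩
          rw [if_pos heq]
          rw [← ihL]
          ring
        · -- i < a : coefficients agree, entry below but shorter
          have haj : (q.1.1 : ℕ) < (j : ℕ) := by
            have := hq
            rw [Fin.lt_def] at this
            rw [hjb]
            exact this
          have hxy : q.2.1 = q.2.2 := by
            apply hagree q (List.mem_cons_self)
            rw [Fin.lt_def] at hai hij
            omega
          have hPagree : Px q.1.1 i = Py q.1.1 i := by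
            have hsub : (q.1.1 : ℕ) - (i : ℕ) ≤ h := by
              rw [Fin.lt_def] at hij
              omega
            have := ih hposL hagreeL i q.1.1 hai hsub
            have hzero : (L.map fun q' => if q'.1 = (i, q.1.1) then q'.2.1 - q'.2.2 else 0).sum
                = 0 := by
              apply List.sum_eq_zero
              intro t ht
              simp only [List.mem_map] at ht
              obtain ⟨q', hq', rfl⟩ := ht
              by_cases hc : q'.1 = (i, q.1.1)
              · rw [if_pos hc]
                have : q'.2.1 = q'.2.2 := by
                  apply hagreeL q' hq'
                  rw [hc]
                  rw [Fin.lt_def] at hai hij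
                  simp only []
                  omega
                rw [this, sub_self]
              · rw [if_neg hc]
            rw [hzero] at this
            exact sub_eq_zero.mp this
          have hne : ¬ (q.1 = (i, j)) := by
            intro hc
            rw [hc] at hai
            exact absurd hai (lt_irrefl _)
          rw [if_pos hjb, if_pos hjb, if_neg hne, hPagree, hxy]
          rw [zero_add]
          calc Px j i + q.2.2 * Py q.1.1 i - (Py j i + q.2.2 * Py q.1.1 i)
              = Px j i - Py j i := by ring
            _ = _ := ihL
      · have hne : ¬ (q.1 = (i, j)) := by
          intro hc
          apply hjb
          rw [hc]
        rw [if_neg hjb, if_neg hjb, if_neg hne, add_zero, add_zero, zero_add]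
        exact ihL

end Mat

variable (F : Type*) [Field F]

/-- The elementary unipotent `e_{−γ_{k+1}}(t) = 1 + t·E_{y,x}` for the root
`γ_{k+1} = e_x − e_y` (0-indexed `k`). -/
def eNegM (r : ℕ) (w : List ℕ) (k : ℕ) (t : F) :
    Matrix (Fin (r + 1)) (Fin (r + 1)) F :=
  1 + Matrix.single (gSnd r w k) (gFst r w k) t

/-- The map `F^N → GL_{r+1}(F)`, `x ↦ e_{−γ_1}(x_1) e_{−γ_2}(x_2) ⋯ e_{−γ_N}(x_N)`. -/
def lowerProd (r : ℕ) (w : List ℕ) (x : Fin (r * (r + 1) / 2) → F) :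
    Matrix (Fin (r + 1)) (Fin (r + 1)) F :=
  (List.ofFn fun k : Fin (r * (r + 1) / 2) => eNegM F r w k.1 (x k)).prod

/-- The lower unitriangular matrices. -/
def LowerUni (r : ℕ) : Set (Matrix (Fin (r + 1)) (Fin (r + 1)) F) :=
  {u | (∀ i, u i i = 1) ∧ ∀ i j, i < j → u i j = 0}

section Main

variable {F}
variable {r : ℕ} {w : List ℕ}

lemma lowerProd_eq (x y : Fin (r * (r + 1) / 2) → F) :
    lowerProd F r w x =
      ((List.ofFn fun k : Fin (r * (r + 1) / 2) =>
        ((gFst r w k.1, gSnd r w k.1), x k, y k)).map fun q => Efac q.1 q.2.1).prod := by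
  rw [List.map_ofFn]
  rfl

lemma lowerProd_eq' (x y : Fin (r * (r + 1) / 2) → F) :
    lowerProd F r w y =
      ((List.ofFn fun k : Fin (r * (r + 1) / 2) =>
        ((gFst r w k.1, gSnd r w k.1), x k, y k)).map fun q => Efac q.1 q.2.2).prod := by
  rw [List.map_ofFn]
  rfl

variable (hletters : ∀ i ∈ w, i < r) (hred : (w.map (sT r)).prod = Fin.revPerm)
  (hlen : w.length = r * (r + 1) / 2)

include hletters hred hlen

lemma hGpos (k : Fin (r * (r + 1) / 2)) : gFst r w k.1 < gSnd r w k.1 :=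
  (ascent w hletters hred hlen (by omega : k.1 < w.length)).1

lemma hGinj (k m : Fin (r * (r + 1) / 2))
    (h : (gFst r w k.1, gSnd r w k.1) = (gFst r w m.1, gSnd r w m.1)) : k = m := by
  by_contra hne
  exact roots_inj w hletters hred hlen k.1 m.1 (by omega) (by omega)
    (fun hc => hne (Fin.ext hc)) h

lemma hGsurj {i j : Fin (r+1)} (hij : i < j) :
    ∃ k : Fin (r * (r + 1) / 2), gFst r w k.1 = i ∧ gSnd r w k.1 = j := by
  obtain ⟨k, hk, h1, h2⟩ := roots_surj w hletters hred hlen hij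
  exact ⟨⟨k, by omega⟩, h1, h2⟩

lemma lowerProd_LU (x : Fin (r * (r + 1) / 2) → F) : LU F (lowerProd F r w x) := by
  apply lu_prod
  intro M hM
  rw [List.mem_ofFn] at hM
  obtain ⟨k, rfl⟩ := hM
  exact lu_Efac (p := (gFst r w k.1, gSnd r w k.1)) (hGpos hletters hred hlen k) (x k)

lemma key2 (h : ℕ) (x y : Fin (r * (r + 1) / 2) → F)
    (hagree : ∀ k : Fin (r * (r + 1) / 2),
      ((gSnd r w k.1 : ℕ) - (gFst r w k.1 : ℕ) < h) → x k = y k)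
    (i j : Fin (r+1)) (hij : i < j) (hh : (j : ℕ) - (i : ℕ) ≤ h) :
    lowerProd F r w x j i - lowerProd F r w y j i =
      ∑ k : Fin (r * (r + 1) / 2),
        if (gFst r w k.1, gSnd r w k.1) = (i, j) then x k - y k else 0 := by
  rw [lowerProd_eq x y, lowerProd_eq' x y]
  rw [key_diff h _ ?hpos ?hagr i j hij hh]
  · rw [List.map_ofFn]
    rw [List.sum_ofFn]
    rfl
  case hpos =>
    intro q hq
    rw [List.mem_ofFn] at hq
    obtain ⟨k, rfl⟩ := hq
    exact hGpos hletters hred hlen k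
  case hagr =>
    intro q hq
    rw [List.mem_ofFn] at hq
    obtain ⟨k, rfl⟩ := hq
    exact hagree k

lemma lp_inj (x y : Fin (r * (r + 1) / 2) → F) (heq : lowerProd F r w x = lowerProd F r w y) :
    x = y := by
  suffices H : ∀ (h : ℕ) (k : Fin (r * (r + 1) / 2)),
      (gSnd r w k.1 : ℕ) - (gFst r w k.1 : ℕ) ≤ h → x k = y k by
    funext k
    exact H r k (by have := (gSnd r w k.1).isLt; omega)
  intro h
  induction h with
  | zero =>
      intro k hk
      have := hGpos hletters hred hlen k
      rw [Fin.lt_def] at this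
      omega
  | succ h ih =>
      intro k hk
      rcases Nat.lt_or_ge ((gSnd r w k.1 : ℕ) - (gFst r w k.1 : ℕ)) (h+1) with hc | hc
      · exact ih k (by omega)
      · have hpos := hGpos hletters hred hlen k
        have hkey := key2 hletters hred hlen (h+1) x y
          (fun m hm => ih m (by omega)) (gFst r w k.1) (gSnd r w k.1) hpos (by omega)
        rw [heq, sub_self] at hkey
        have hsum : ∑ m : Fin (r * (r + 1) / 2),
            (if (gFst r w m.1, gSnd r w m.1) = (gFst r w k.1, gSnd r w k.1)
              then x m - y m else 0) = x k - y k := by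
          rw [Finset.sum_eq_single k]
          · rw [if_pos rfl]
          · intro m _ hmk
            rw [if_neg]
            intro hc2
            exact hmk (hGinj hletters hred hlen m k hc2)
          · intro hk'
            exact absurd (Finset.mem_univ k) hk'
        rw [hsum] at hkey
        exact sub_eq_zero.mp hkey.symm

lemma lp_surj (u : Matrix (Fin (r+1)) (Fin (r+1)) F) (hu : u ∈ LowerUni F r) :
    ∃ x, lowerProd F r w x = u := by
  have claim : ∀ h : ℕ, ∃ x : Fin (r * (r + 1) / 2) → F,
      ∀ i j : Fin (r+1), i < j → (j : ℕ) - (i : ℕ) ≤ h → lowerProd F r w x j i = u j i := by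
    intro h
    induction h with
    | zero =>
        refine ⟨fun _ => 0, fun i j hij hh => ?_⟩
        rw [Fin.lt_def] at hij
        omega
    | succ h ih =>
        obtain ⟨x, hx⟩ := ih
        set y : Fin (r * (r + 1) / 2) → F := fun k =>
          if (gSnd r w k.1 : ℕ) - (gFst r w k.1 : ℕ) = h + 1
            then x k + (u (gSnd r w k.1) (gFst r w k.1)
              - lowerProd F r w x (gSnd r w k.1) (gFst r w k.1))
            else x k with hy
        have hagree : ∀ k : Fin (r * (r + 1) / 2),
            ((gSnd r w k.1 : ℕ) - (gFst r w k.1 : ℕ) < h + 1) → y k = x k := by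
          intro k hk
          rw [hy]
          simp only []
          rw [if_neg (by omega)]
        refine ⟨y, fun i j hij hh => ?_⟩
        have hdiff := key2 hletters hred hlen (h+1) y x hagree i j hij hh
        rcases Nat.lt_or_ge ((j : ℕ) - (i : ℕ)) (h+1) with hc | hc
        · have hzero : ∑ k : Fin (r * (r + 1) / 2),
              (if (gFst r w k.1, gSnd r w k.1) = (i, j) then y k - x k else 0) = 0 := by
            apply Finset.sum_eq_zero
            intro k _
            by_cases hck : (gFst r w k.1, gSnd r w k.1) = (i, j)
            · rw [if_pos hck]
              have h1 : gFst r w k.1 = i := congrArg Prod.fst hck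
              have h2 : gSnd r w k.1 = j := congrArg Prod.snd hck
              rw [hagree k (by rw [h1, h2]; omega), sub_self]
            · rw [if_neg hck]
          rw [hzero] at hdiff
          rw [sub_eq_zero.mp hdiff]
          exact hx i j hij (by omega)
        · have hex : (j : ℕ) - (i : ℕ) = h + 1 := by omega
          obtain ⟨k0, hk1, hk2⟩ := hGsurj hletters hred hlen hij
          have hsum : ∑ k : Fin (r * (r + 1) / 2),
              (if (gFst r w k.1, gSnd r w k.1) = (i, j) then y k - x k else 0)
                = y k0 - x k0 := by
            rw [Finset.sum_eq_single k0]
            · rw [if_pos (by rw [hk1, hk2])]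
            · intro m _ hmk
              rw [if_neg]
              intro hc2
              apply hmk
              apply hGinj hletters hred hlen m k0
              rw [hc2, hk1, hk2]
            · intro hk'
              exact absurd (Finset.mem_univ k0) hk'
          have hyk0 : y k0 - x k0 = u j i - lowerProd F r w x j i := by
            rw [hy]
            simp only []
            rw [if_pos (by rw [hk1, hk2]; omega), hk1, hk2]
            ring
          rw [hsum, hyk0] at hdiff
          have := sub_eq_sub_iff_sub_eq_sub.mp hdiff
          linear_combination hdiff
  obtain ⟨x, hx⟩ := claim r
  refine ⟨x, ?_⟩
  ext p q
  rcases lt_trichotomy p q with h | h | h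
  · rw [(lowerProd_LU hletters hred hlen x).2 p q h, hu.2 p q h]
  · subst h
    rw [(lowerProd_LU hletters hred hlen x).1 p, hu.1 p]
  · exact hx q p h (by have := p.isLt; omega)

end Main

/-- For any reduced word for the longest element `w₀` of `S_{r+1}` and the induced
enumeration `γ_1, …, γ_N` of `Φ⁺`, the map `x ↦ e_{−γ_1}(x_1) ⋯ e_{−γ_N}(x_N)` is a
bijection from `F^N` onto the lower unitriangular matrices of `GL_{r+1}(F)`; in
particular every lower unitriangular `u` is such a product for unique `x_1, …, x_N`. -/
theorem lower_unitriangular_unique_coordinates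
    (r : ℕ) (hr : 1 ≤ r) (w : List ℕ)
    (hlen : w.length = r * (r + 1) / 2)
    (hletters : ∀ i ∈ w, i < r)
    (hred : (w.map (sT r)).prod = Fin.revPerm) :
    Set.BijOn (lowerProd F r w) Set.univ (LowerUni F r) ∧
    ∀ u ∈ LowerUni F r, ∃! x : Fin (r * (r + 1) / 2) → F, lowerProd F r w x = u := by
  constructor
  · refine ⟨?_, ?_, ?_⟩
    · intro x _
      exact (lowerProd_LU hletters hred hlen x)
    · intro x _ y _ h
      exact lp_inj hletters hred hlen x y h
    · intro u hu
      obtain ⟨x, hx⟩ := lp_surj hletters hred hlen u hu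
      exact ⟨x, Set.mem_univ x, hx⟩
  · intro u hu
    obtain ⟨x, hx⟩ := lp_surj hletters hred hlen u hu
    exact ⟨x, hx, fun y hy => lp_inj hletters hred hlen y x (by rw [hx, hy])⟩
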